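/- Let T be a pruned rooted tree (every node lies on some ray) and suppose some node t ∈ T has an infinite family (t_α : α < λ) of immediate successors, with λ an infinite cardinal. For each α choose a minimal ray R_α containing t_α. Then {R_α : α < λ} is a closed discrete subset of the ray space R(T) of cardinality λ. -/

import Mathlib

open Set Topology

/-- An order-theoretic tree: every set of predecessors is a well-ordered chain. -/
def IsOrderTree (T : Type*) [PartialOrder T] : Prop :=
  ∀ t : T, (Set.Iio t).IsWF ∧ IsChain (· ≤ ·) (Set.Iio t)

/-- A ray: a nonempty, downward closed chain with no maximal element. -/
def IsRay {T : Type*} [PartialOrder T] (R : Set T) : Prop :=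
  R.Nonempty ∧ IsChain (· ≤ ·) R ∧ (∀ x ∈ R, ∀ y, y ≤ x → y ∈ R) ∧
    ∀ x ∈ R, ∃ y ∈ R, x < y

/-- The ray space of a tree. -/
def RaySpace (T : Type*) [PartialOrder T] := {R : Set T // IsRay R}

/-- The topology on the ray space, inherited from the product topology on `2^T`:
subbasic open sets are `[t] = {R : t ∈ R}` and their complements. -/
instance {T : Type*} [PartialOrder T] : TopologicalSpace (RaySpace T) :=
  TopologicalSpace.generateFrom
    {U | ∃ t : T, U = {R : RaySpace T | t ∈ R.val} ∨ U = {R : RaySpace T | t ∉ R.val}}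

universe u_1 u_2

/-- Let `T` be a pruned rooted tree and let `t ∈ T` have an infinite family `(ts a : a : ι)`
of pairwise distinct immediate successors. Choosing for each `a` a minimal ray `R a`
containing `ts a`, the set `{R a}` is a closed discrete subset of `R(T)` of cardinality `#ι`. -/
theorem minimal_rays_closed_discrete {T : Type u_1} [PartialOrder T]
    (htree : IsOrderTree T) (r : T) (hroot : ∀ t : T, r ≤ t)
    (hpruned : ∀ t : T, ∃ R : Set T, IsRay R ∧ t ∈ R)
    (t : T) {ι : Type u_2} [Infinite ι] (ts : ι → T)
    (hinj : Function.Injective ts) (hsucc : ∀ a : ι, t ⋖ ts a)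
    (R : ι → RaySpace T) (hmem : ∀ a : ι, ts a ∈ (R a).val)
    (hmin : ∀ a : ι, ∀ R' : RaySpace T, ts a ∈ R'.val → R'.val ⊆ (R a).val →
      R'.val = (R a).val) :
    IsClosed (Set.range R) ∧ DiscreteTopology (Set.range R) ∧
      Cardinal.lift.{u_2} (Cardinal.mk (Set.range R)) = Cardinal.lift.{u_1} (Cardinal.mk ι) := by
  have hchain : ∀ a, IsChain (· ≤ ·) (R a).val := fun a => (R a).2.2.1
  have hdown : ∀ a, ∀ x ∈ (R a).val, ∀ y, y ≤ x → y ∈ (R a).val := fun a => (R a).2.2.2.1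
  have ht_mem : ∀ a, t ∈ (R a).val := fun a => hdown a (ts a) (hmem a) t (hsucc a).le
  -- two comparable covers of t are equal
  have cov_eq : ∀ x y : T, t ⋖ x → t ⋖ y → (x ≤ y ∨ y ≤ x) → x = y := by
    rintro x y hx hy (h | h)
    · rcases h.lt_or_eq with h' | h'
      · exact absurd h' (hy.2 hx.1)
      · exact h'
    · rcases h.lt_or_eq with h' | h'
      · exact absurd h' (hx.2 hy.1)
      · exact h'.symm
  -- any cover of t belonging to R a is ts a
  have cov_mem : ∀ (a : ι) (z : T), t ⋖ z → z ∈ (R a).val → z = ts a := by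
    intro a z hz hzR
    rcases eq_or_ne z (ts a) with h | h
    · exact h
    · exact cov_eq z (ts a) hz (hsucc a) (hchain a hzR (hmem a) h)
  have memA : ∀ a b : ι, ts b ∈ (R a).val → a = b := fun a b hb =>
    (hinj (cov_mem a (ts b) (hsucc b) hb)).symm
  have hRinj : Function.Injective R := by
    intro a b hab
    exact memA a b (by rw [hab]; exact hmem b)
  have hopen_mem : ∀ z : T, IsOpen {R' : RaySpace T | z ∈ R'.val} :=
    fun z => TopologicalSpace.GenerateOpen.basic _ ⟨z, Or.inl rfl⟩
  have hopen_not : ∀ z : T, IsOpen {R' : RaySpace T | z ∉ R'.val} :=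
    fun z => TopologicalSpace.GenerateOpen.basic _ ⟨z, Or.inr rfl⟩
  refine ⟨?_, ?_, ?_⟩
  · -- closed
    rw [← isOpen_compl_iff, isOpen_iff_forall_mem_open]
    intro S hS
    by_cases ht : t ∈ S.val
    · -- find minimal element z of S above t
      obtain ⟨y, hyS, hty⟩ := S.2.2.2.2 t ht
      have hBwf : ({x | x ∈ S.val ∧ t < x ∧ x ≤ y} : Set T).IsWF := by
        refine Set.IsWF.mono (((htree y).1).insert y) ?_
        rintro x ⟨_, _, hxy⟩
        rcases hxy.lt_or_eq with h | h
        · exact Or.inr h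
        · exact Or.inl h
      have hBne : ({x | x ∈ S.val ∧ t < x ∧ x ≤ y} : Set T).Nonempty :=
        ⟨y, hyS, hty, le_refl y⟩
      set z := hBwf.min hBne with hz
      have hzB : z ∈ {x | x ∈ S.val ∧ t < x ∧ x ≤ y} := hBwf.min_mem hBne
      have hcov : t ⋖ z := by
        refine ⟨hzB.2.1, fun c htc hcz => ?_⟩
        have hcS : c ∈ S.val := S.2.2.2.1 z hzB.1 c hcz.le
        exact hBwf.not_lt_min hBne ⟨hcS, htc, hcz.le.trans hzB.2.2⟩ hcz
      by_cases hex : ∃ a, z = ts a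
      · obtain ⟨a, hza⟩ := hex
        have hne : ¬ S.val ⊆ (R a).val := by
          intro h
          exact hS ⟨a, (Subtype.ext (hmin a S (hza ▸ hzB.1) h)).symm⟩
        obtain ⟨s, hsS, hsR⟩ := Set.not_subset.mp hne
        refine ⟨{R' : RaySpace T | s ∈ R'.val}, ?_, hopen_mem s, hsS⟩
        rintro S' hS' ⟨b, rfl⟩
        -- s ∈ R b; compare s and ts a inside S
        have hsRb : s ∈ (R b).val := hS'
        have htsaS : ts a ∈ S.val := hza ▸ hzB.1
        rcases eq_or_ne s (ts a) with h | h
        · exact hsR (h ▸ hmem a)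
        rcases S.2.2.1 hsS htsaS h with h' | h'
        · exact hsR (hdown a (ts a) (hmem a) s h')
        · have : ts a ∈ (R b).val := hdown b s hsRb (ts a) h'
          exact hsR ((memA b a this) ▸ hsRb)
      · refine ⟨{R' : RaySpace T | z ∈ R'.val}, ?_, hopen_mem z, hzB.1⟩
        rintro S' hS' ⟨b, rfl⟩
        exact hex ⟨b, cov_mem b z hcov hS'⟩
    · refine ⟨{R' : RaySpace T | t ∉ R'.val}, ?_, hopen_not t, ht⟩
      rintro S' hS' ⟨b, rfl⟩
      exact hS' (ht_mem b)
  · -- discrete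
    rw [discreteTopology_iff_isOpen_singleton]
    rintro ⟨S, hS⟩
    obtain ⟨b, hb⟩ := id hS
    have heq : ({⟨S, hS⟩} : Set (Set.range R)) =
        (fun x : Set.range R => (x : RaySpace T)) ⁻¹' {R' : RaySpace T | ts b ∈ R'.val} := by
      ext x
      obtain ⟨S', a, ha⟩ := x
      simp only [mem_singleton_iff, mem_preimage, mem_setOf_eq, Subtype.mk.injEq, Subtype.ext_iff]
      constructor
      · intro h
        rw [h, ← hb]
        exact hmem b
      · intro h
        rw [← ha] at h ⊢
        rw [← hb, ← congrArg R (memA a b h)]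
    rw [heq]
    exact (hopen_mem (ts b)).preimage continuous_subtype_val
  · exact Cardinal.mk_range_eq_of_injective hRinj
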